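/- Let k ≥ 3 and define g(ν) = (k-1)·ν/(1 - (1-ν)^{k-1}) + 1 - (k-1)·ν for ν ∈ (0, 1/(k-1)). Then g is strictly decreasing on this interval. -/

import Mathlib

private lemma key_mono (n : ℕ) (hn : 2 ≤ n) {s t : ℝ} (hs : 0 < s) (hst : s < t)
    (ht : t < 1) :
    (n : ℝ) * s ^ n / (∑ i ∈ Finset.range n, s ^ i) <
      (n : ℝ) * t ^ n / (∑ i ∈ Finset.range n, t ^ i) := by
  have ht0 : 0 < t := hs.trans hst
  have hSs : 0 < ∑ i ∈ Finset.range n, s ^ i := by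
    apply Finset.sum_pos (fun i _ => pow_pos hs i)
    exact Finset.nonempty_range_iff.mpr (by omega)
  have hSt : 0 < ∑ i ∈ Finset.range n, t ^ i := by
    apply Finset.sum_pos (fun i _ => pow_pos ht0 i)
    exact Finset.nonempty_range_iff.mpr (by omega)
  rw [div_lt_div_iff₀ hSs hSt]
  have hn0 : (0 : ℝ) < (n : ℝ) := by positivity
  have hkey : s ^ n * ∑ i ∈ Finset.range n, t ^ i <
      t ^ n * ∑ i ∈ Finset.range n, s ^ i := by
    rw [Finset.mul_sum, Finset.mul_sum]
    apply Finset.sum_lt_sum_of_nonempty (Finset.nonempty_range_iff.mpr (by omega))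
    intro i hi
    have hi' : i < n := Finset.mem_range.mp hi
    have h1 : s ^ n = s ^ (n - i) * s ^ i := by
      rw [← pow_add, Nat.sub_add_cancel hi'.le]
    have h2 : t ^ n = t ^ (n - i) * t ^ i := by
      rw [← pow_add, Nat.sub_add_cancel hi'.le]
    have h3 : s ^ (n - i) < t ^ (n - i) :=
      pow_lt_pow_left₀ hst hs.le (by omega)
    have h4 : (0 : ℝ) < s ^ i * t ^ i := by positivity
    calc s ^ n * t ^ i = s ^ (n - i) * (s ^ i * t ^ i) := by rw [h1]; ring
      _ < t ^ (n - i) * (s ^ i * t ^ i) := mul_lt_mul_of_pos_right h3 h4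
      _ = t ^ n * s ^ i := by rw [h2]; ring
  calc (n : ℝ) * s ^ n * ∑ i ∈ Finset.range n, t ^ i
      = (n : ℝ) * (s ^ n * ∑ i ∈ Finset.range n, t ^ i) := by ring
    _ < (n : ℝ) * (t ^ n * ∑ i ∈ Finset.range n, s ^ i) := by
        exact (mul_lt_mul_iff_right₀ hn0).mpr hkey
    _ = (n : ℝ) * t ^ n * ∑ i ∈ Finset.range n, s ^ i := by ring

private lemma g_eq (n : ℕ) (hn : 2 ≤ n) {x : ℝ} (hx0 : 0 < x)
    (hx1 : x < 1 / (n : ℝ)) :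
    (n : ℝ) * x / (1 - (1 - x) ^ n) + 1 - (n : ℝ) * x =
      1 + (n : ℝ) * (1 - x) ^ n / (∑ i ∈ Finset.range n, (1 - x) ^ i) := by
  have hn0 : (0 : ℝ) < (n : ℝ) := by positivity
  have hx1' : x < 1 := hx1.trans_le (by
    rw [div_le_one hn0]
    exact_mod_cast Nat.one_le_iff_ne_zero.mpr (by omega))
  set t : ℝ := 1 - x with htdef
  have ht0 : 0 < t := by simp [htdef]; linarith
  have hS : 0 < ∑ i ∈ Finset.range n, t ^ i := by
    apply Finset.sum_pos (fun i _ => pow_pos ht0 i)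
    exact Finset.nonempty_range_iff.mpr (by omega)
  have hgeom : (∑ i ∈ Finset.range n, t ^ i) * (t - 1) = t ^ n - 1 := geom_sum_mul t n
  have hdenom : 1 - t ^ n = (∑ i ∈ Finset.range n, t ^ i) * x := by
    have : x = -(t - 1) := by rw [htdef]; ring
    rw [this]; linarith [hgeom]
  rw [hdenom]
  field_simp
  linear_combination ((n : ℝ)) * hdenom

/-- The function `g(ν) = (k-1)ν/(1-(1-ν)^{k-1}) + 1 - (k-1)ν` is strictly
decreasing on `(0, 1/(k-1))` for `k ≥ 3`. -/
theorem stmt_7 (k : ℕ) (hk : 3 ≤ k) :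
    StrictAntiOn
      (fun ν : ℝ =>
        ((k : ℝ) - 1) * ν / (1 - (1 - ν) ^ (k - 1)) + 1 - ((k : ℝ) - 1) * ν)
      (Set.Ioo 0 (1 / ((k : ℝ) - 1))) := by
  set n := k - 1 with hn
  have hn2 : 2 ≤ n := by omega
  have hcast : ((k : ℝ) - 1) = (n : ℝ) := by
    rw [hn]; push_cast [Nat.cast_sub (by omega : 1 ≤ k)]; ring
  intro a ha b hb hab
  simp only [hcast] at ha hb ⊢
  rw [Set.mem_Ioo] at ha hb
  rw [g_eq n hn2 ha.1 ha.2, g_eq n hn2 hb.1 hb.2]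
  have h1b : 0 < 1 - b := by
    have : b < 1 := hb.2.trans_le (by
      rw [div_le_one (by positivity : (0:ℝ) < (n:ℝ))]
      exact_mod_cast Nat.one_le_iff_ne_zero.mpr (by omega))
    linarith
  have := key_mono n hn2 h1b (by linarith : 1 - b < 1 - a) (by linarith : 1 - a < 1)
  linarith
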